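/- Let H be a bialgebra over a commutative ring k and let F ∈ H ⊗ H be an invertible element satisfying the normalization conditions (ε ⊗ id)(F) = 1 and (id ⊗ ε)(F) = 1 (identifying k ⊗ H and H ⊗ k with H), together with the cocycle condition F₁₂·(Δ⊗id)(F) = F₂₃·(id⊗Δ)(F) in H ⊗ H ⊗ H, where F₁₂ = F ⊗ 1 and F₂₃ = 1 ⊗ F. Then the twisted comultiplication Δ_F : H → H ⊗ H defined by Δ_F(x) := F·Δ(x)·F⁻¹ is coassociative, i.e., (Δ_F ⊗ id)(Δ_F(x)) = (id ⊗ Δ_F)(Δ_F(x)) for all x ∈ H (under the canonical associativity identification of (H⊗H)⊗H with H⊗(H⊗H)), and ε remains a counit for Δ_F, i.e., (ε ⊗ id)(Δ_F(x)) = x = (id ⊗ ε)(Δ_F(x)). Hence twisting by an admissible (Drinfel'd) twist F preserves the bialgebra axioms for the comultiplication. -/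

import Mathlib

open scoped TensorProduct

variable (k H : Type*) [CommRing k] [Ring H] [Bialgebra k H]

/-- The algebra homomorphism `φ₁₂ : H ⊗ H → H ⊗ H ⊗ H`, `a ⊗ b ↦ a ⊗ b ⊗ 1`
(so `F₁₂ = φ₁₂(F)` is `F ⊗ 1` under the canonical associativity identification). -/
noncomputable def phi12 : H ⊗[k] H →ₐ[k] H ⊗[k] (H ⊗[k] H) :=
  Algebra.TensorProduct.map (AlgHom.id k H) Algebra.TensorProduct.includeLeft

/-- The algebra homomorphism `φ₂₃ : H ⊗ H → H ⊗ H ⊗ H`, `a ⊗ b ↦ 1 ⊗ a ⊗ b`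
(so `F₂₃ = φ₂₃(F) = 1 ⊗ F`). -/
noncomputable def phi23 : H ⊗[k] H →ₐ[k] H ⊗[k] (H ⊗[k] H) :=
  Algebra.TensorProduct.includeRight

/-- The algebra homomorphism `Δ ⊗ id : H ⊗ H → H ⊗ H ⊗ H` (composed with the canonical
associativity identification). -/
noncomputable def comulTensorId : H ⊗[k] H →ₐ[k] H ⊗[k] (H ⊗[k] H) :=
  (Algebra.TensorProduct.assoc k k k H H H).toAlgHom.comp
    (Algebra.TensorProduct.map (Bialgebra.comulAlgHom k H) (AlgHom.id k H))

/-- The algebra homomorphism `id ⊗ Δ : H ⊗ H → H ⊗ H ⊗ H`. -/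
noncomputable def idTensorComul : H ⊗[k] H →ₐ[k] H ⊗[k] (H ⊗[k] H) :=
  Algebra.TensorProduct.map (AlgHom.id k H) (Bialgebra.comulAlgHom k H)

/-- The map `ε ⊗ id : H ⊗ H → H` (using the canonical identification `k ⊗ H ≅ H`). -/
noncomputable def counitTensorId : H ⊗[k] H →ₐ[k] H :=
  (Algebra.TensorProduct.lid k H).toAlgHom.comp
    (Algebra.TensorProduct.map (Bialgebra.counitAlgHom k H) (AlgHom.id k H))

/-- The map `id ⊗ ε : H ⊗ H → H` (using the canonical identification `H ⊗ k ≅ H`). -/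
noncomputable def idTensorCounit : H ⊗[k] H →ₐ[k] H :=
  (Algebra.TensorProduct.rid k k H).toAlgHom.comp
    (Algebra.TensorProduct.map (AlgHom.id k H) (Bialgebra.counitAlgHom k H))

/-- The twisted comultiplication `Δ_F(x) = F·Δ(x)·F⁻¹`, as a `k`-linear map, where
`Finv` is the (two-sided) inverse of the twist `F`. -/
noncomputable def twistedComul (F Finv : H ⊗[k] H) : H →ₗ[k] H ⊗[k] H :=
  (LinearMap.mulLeft k F) ∘ₗ (LinearMap.mulRight k Finv) ∘ₗ
    (Bialgebra.comulAlgHom k H).toLinearMap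

lemma twistedComul_apply (F Finv : H ⊗[k] H) (x : H) :
    twistedComul k H F Finv x = F * Coalgebra.comul x * Finv := by
  simp [twistedComul, mul_assoc]

lemma phi12_comm (z : H ⊗[k] H) (b : H) :
    phi12 k H z * ((1:H) ⊗ₜ[k] (((1:H) ⊗ₜ[k] b) : H ⊗[k] H)) =
      ((1:H) ⊗ₜ[k] (((1:H) ⊗ₜ[k] b) : H ⊗[k] H)) * phi12 k H z := by
  induction z using TensorProduct.induction_on with
  | zero => simp
  | tmul x y => simp [phi12, Algebra.TensorProduct.tmul_mul_tmul]
  | add u v hu hv => simp [map_add, add_mul, mul_add, hu, hv]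

lemma phi23_comm (z : H ⊗[k] H) (a : H) :
    (a ⊗ₜ[k] ((1:H ⊗[k] H))) * phi23 k H z =
      phi23 k H z * (a ⊗ₜ[k] ((1:H ⊗[k] H))) := by
  simp only [phi23, Algebra.TensorProduct.includeRight_apply,
    Algebra.TensorProduct.tmul_mul_tmul, one_mul, mul_one]

lemma assoc_tmul_right (u : H ⊗[k] H) (b : H) :
    (TensorProduct.assoc k H H H) (u ⊗ₜ[k] b) =
      phi12 k H u * ((1:H) ⊗ₜ[k] (((1:H) ⊗ₜ[k] b) : H ⊗[k] H)) := by
  induction u using TensorProduct.induction_on with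
  | zero => simp
  | tmul x y => simp [phi12, Algebra.TensorProduct.tmul_mul_tmul]
  | add u v hu hv => simp [TensorProduct.add_tmul, map_add, add_mul, hu, hv]

lemma lemA (F Finv : H ⊗[k] H) (y : H ⊗[k] H) :
    (TensorProduct.assoc k H H H)
      ((TensorProduct.map (twistedComul k H F Finv) LinearMap.id) y) =
    phi12 k H F * comulTensorId k H y * phi12 k H Finv := by
  induction y using TensorProduct.induction_on with
  | zero => simp
  | tmul a b =>
    have h1 : comulTensorId k H (a ⊗ₜ[k] b) =
        (TensorProduct.assoc k H H H) ((Coalgebra.comul a : H ⊗[k] H) ⊗ₜ[k] b) := rfl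
    rw [TensorProduct.map_tmul, LinearMap.id_apply, twistedComul_apply,
      assoc_tmul_right, h1, assoc_tmul_right, map_mul, map_mul]
    simp only [mul_assoc]
    rw [phi12_comm]
  | add u v hu hv => simp [map_add, add_mul, mul_add, hu, hv]

lemma lemB (F Finv : H ⊗[k] H) (y : H ⊗[k] H) :
    (TensorProduct.map LinearMap.id (twistedComul k H F Finv)) y =
    phi23 k H F * idTensorComul k H y * phi23 k H Finv := by
  induction y using TensorProduct.induction_on with
  | zero => simp
  | tmul a b =>
    have h1 : idTensorComul k H (a ⊗ₜ[k] b) = a ⊗ₜ[k] (Coalgebra.comul b : H ⊗[k] H) := by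
      simp [idTensorComul, Bialgebra.comulAlgHom_apply]
    rw [TensorProduct.map_tmul, LinearMap.id_apply, twistedComul_apply, h1]
    simp only [phi23, Algebra.TensorProduct.includeRight_apply,
      Algebra.TensorProduct.tmul_mul_tmul, one_mul, mul_one, mul_assoc]
  | add u v hu hv => simp [map_add, add_mul, mul_add, hu, hv]

lemma comulTensorId_comul (x : H) :
    comulTensorId k H (Coalgebra.comul x) = idTensorComul k H (Coalgebra.comul x) := by
  have h1 : comulTensorId k H (Coalgebra.comul x) =
      (TensorProduct.assoc k H H H)
        ((LinearMap.rTensor H (Coalgebra.comul (R := k))) (Coalgebra.comul x)) := rfl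
  have h2 : idTensorComul k H (Coalgebra.comul x) =
      (LinearMap.lTensor H (Coalgebra.comul (R := k))) (Coalgebra.comul x) := rfl
  rw [h1, h2, Coalgebra.coassoc_apply]

lemma counitTensorId_comul (x : H) : counitTensorId k H (Coalgebra.comul x) = x := by
  have h1 : counitTensorId k H (Coalgebra.comul x) =
      (TensorProduct.lid k H)
        ((LinearMap.rTensor H (Coalgebra.counit (R := k))) (Coalgebra.comul x)) := rfl
  rw [h1, Coalgebra.rTensor_counit_comul]
  simp

lemma idTensorCounit_eq (z : H ⊗[k] H) :
    idTensorCounit k H z =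
      (TensorProduct.rid k H) ((LinearMap.lTensor H (Coalgebra.counit (R := k))) z) := by
  induction z using TensorProduct.induction_on with
  | zero => simp
  | tmul a b => simp [idTensorCounit, Algebra.TensorProduct.rid_tmul]
  | add u v hu hv => simp [map_add, hu, hv]

lemma idTensorCounit_comul (x : H) : idTensorCounit k H (Coalgebra.comul x) = x := by
  rw [idTensorCounit_eq, Coalgebra.lTensor_counit_comul]
  simp

/-- **Drinfel'd twisting preserves the bialgebra comultiplication axioms.**
If `F ∈ H ⊗ H` is invertible with inverse `Finv`, is normalized, i.e.
`(ε ⊗ id)(F) = 1` and `(id ⊗ ε)(F) = 1`, and satisfies the cocycle condition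
`F₁₂·(Δ⊗id)(F) = F₂₃·(id⊗Δ)(F)`, then the twisted comultiplication
`Δ_F(x) = F·Δ(x)·F⁻¹` is coassociative (under the canonical associativity
identification) and `ε` remains a counit for `Δ_F`. -/
theorem twisted_comul_coassoc_counit (F Finv : H ⊗[k] H)
    (hF1 : F * Finv = 1) (hF2 : Finv * F = 1)
    (hnorm1 : counitTensorId k H F = 1) (hnorm2 : idTensorCounit k H F = 1)
    (hcocycle : phi12 k H F * comulTensorId k H F = phi23 k H F * idTensorComul k H F) :
    (∀ x : H,
      (TensorProduct.assoc k H H H)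
        ((TensorProduct.map (twistedComul k H F Finv) LinearMap.id)
          (twistedComul k H F Finv x)) =
      (TensorProduct.map LinearMap.id (twistedComul k H F Finv))
        (twistedComul k H F Finv x)) ∧
    (∀ x : H, counitTensorId k H (twistedComul k H F Finv x) = x) ∧
    (∀ x : H, idTensorCounit k H (twistedComul k H F Finv x) = x) := by
  set G := phi12 k H F * comulTensorId k H F with hG
  set A := comulTensorId k H Finv * phi12 k H Finv with hA
  set B := idTensorComul k H Finv * phi23 k H Finv with hB
  have hAG : A * G = 1 := by
    rw [hA, hG, mul_assoc, ← mul_assoc (phi12 k H Finv), ← map_mul, hF2, map_one, one_mul,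
      ← map_mul, hF2, map_one]
  have hGB : G * B = 1 := by
    rw [hcocycle, hB, mul_assoc, ← mul_assoc (idTensorComul k H F), ← map_mul, hF1,
      map_one, one_mul, ← map_mul, hF1, map_one]
  have hAB : A = B := by
    calc A = A * (G * B) := by rw [hGB, mul_one]
    _ = (A * G) * B := (mul_assoc A G B).symm
    _ = B := by rw [hAG, one_mul]
  refine ⟨fun x => ?_, fun x => ?_, fun x => ?_⟩
  · rw [lemA, lemB, twistedComul_apply, map_mul, map_mul, map_mul, map_mul,
      comulTensorId_comul]
    have e1 : phi12 k H F * (comulTensorId k H F * idTensorComul k H (Coalgebra.comul x) *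
          comulTensorId k H Finv) * phi12 k H Finv =
        G * idTensorComul k H (Coalgebra.comul x) * A := by
      rw [hG, hA]; simp only [mul_assoc]
    have e2 : phi23 k H F * (idTensorComul k H F * idTensorComul k H (Coalgebra.comul x) *
          idTensorComul k H Finv) * phi23 k H Finv =
        G * idTensorComul k H (Coalgebra.comul x) * B := by
      rw [hcocycle, hB]; simp only [mul_assoc]
    rw [e1, e2, hAB]
  · have hFinv : counitTensorId k H Finv = 1 := by
      have := map_mul (counitTensorId k H) F Finv
      rw [hF1, map_one, hnorm1, one_mul] at this
      exact this.symm
    rw [twistedComul_apply, map_mul, map_mul, hnorm1, hFinv, one_mul, mul_one,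
      counitTensorId_comul]
  · have hFinv : idTensorCounit k H Finv = 1 := by
      have := map_mul (idTensorCounit k H) F Finv
      rw [hF1, map_one, hnorm2, one_mul] at this
      exact this.symm
    rw [twistedComul_apply, map_mul, map_mul, hnorm2, hFinv, one_mul, mul_one,
      idTensorCounit_comul]
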